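/- Every probability measure μ on [0,1] ∪ {∞} solving the equation ∫_{[0,t]} s dμ(s) = μ([0,t])² for all t ∈ [0,1] has cumulative distribution function F(t) = μ([0,t]) satisfying: wherever F is continuous and has no atoms on an interval, F is constant on regions where F(t) ≠ t/2; if μ has an atom of mass c > 0 at t, then μ([0,t)) = t/2 − c/2 (i.e., F jumps from t/2 − c/2 to t/2 + c/2 at t). -/

import Mathlib

open MeasureTheory Set Filter
open scoped ENNReal

private lemma stmt3aux_anti {c : ℝ} (hc : 0 ≤ c) {m n : ℕ} (hmn : m ≤ n) :
    c/((n:ℝ)+1) ≤ c/((m:ℝ)+1) :=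
  div_le_div_of_nonneg_left hc (by positivity)
    (by have := (Nat.cast_le (α := ℝ)).2 hmn; linarith)

private lemma stmt3aux_le {c : ℝ} (hc : 0 ≤ c) (n : ℕ) : c/((n:ℝ)+1) ≤ c :=
  div_le_self hc (by have : (0:ℝ) ≤ n := Nat.cast_nonneg n; linarith)

private lemma stmt3aux_pos {c : ℝ} (hc : 0 < c) (n : ℕ) : 0 < c/((n:ℝ)+1) :=
  div_pos hc (by positivity)

private lemma stmt3aux_tendsto (a c : ℝ) :
    Tendsto (fun n : ℕ => a + c/((n:ℝ)+1)) atTop (nhds a) := by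
  have h1 : Tendsto (fun n : ℕ => (n:ℝ)+1) atTop atTop :=
    tendsto_atTop_add_const_right _ _ tendsto_natCast_atTop_atTop
  have h2 : Tendsto (fun n : ℕ => c/((n:ℝ)+1)) atTop (nhds 0) :=
    Tendsto.div_atTop tendsto_const_nhds h1
  simpa using tendsto_const_nhds.add h2

private lemma stmt3_unionIcc {b t : ℝ} (hb : 0 ≤ b) (hbt : b < t) :
    (⋃ n : ℕ, Icc (0:ℝ≥0∞) (ENNReal.ofReal (t - (t-b)/(n+1)))) = Ico 0 (ENNReal.ofReal t) := by
  have htb : 0 < t - b := by linarith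
  have ht : 0 < t := lt_of_le_of_lt hb hbt
  have hxnn : ∀ n : ℕ, 0 ≤ t - (t-b)/(n+1) := by
    intro n
    have h1 : (t-b)/(n+1) ≤ t - b := stmt3aux_le htb.le n
    linarith
  ext y
  simp only [mem_iUnion, mem_Icc, mem_Ico, zero_le, true_and]
  constructor
  · rintro ⟨n, hn⟩
    refine lt_of_le_of_lt hn (ENNReal.ofReal_lt_ofReal_iff ht |>.2 ?_)
    have : 0 < (t-b)/(n+1) := stmt3aux_pos htb n
    linarith
  · intro hy
    have hytop : y ≠ ⊤ := (lt_of_lt_of_le hy le_top).ne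
    have hyt : y.toReal < t := (ENNReal.lt_ofReal_iff_toReal_lt hytop).1 hy
    obtain ⟨n, hn⟩ := exists_nat_gt ((t-b)/(t - y.toReal))
    refine ⟨n, (ENNReal.le_ofReal_iff_toReal_le hytop (hxnn n)).2 ?_⟩
    have hpos : 0 < t - y.toReal := by linarith
    have h2 : (t-b)/(n+1) < t - y.toReal := by
      rw [div_lt_iff₀ (by positivity)]
      calc t - b = ((t-b)/(t-y.toReal)) * (t - y.toReal) := by field_simp
        _ < (t - y.toReal) * (n+1) := by
            rw [mul_comm ((t-b)/(t-y.toReal))]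
            apply mul_lt_mul_of_pos_left _ hpos
            linarith
    linarith

private lemma stmt3_key (μ : Measure ℝ≥0∞) [IsProbabilityMeasure μ]
    (hRDE : ∀ t ∈ Set.Icc (0:ℝ) 1,
      ∫⁻ s in Set.Icc 0 (ENNReal.ofReal t), s ∂μ
        = (μ (Set.Icc 0 (ENNReal.ofReal t)))^2)
    {r x : ℝ} (hr : 0 ≤ r) (hrx : r ≤ x) (hx : x ≤ 1) :
    ENNReal.ofReal r * μ (Ioc (ENNReal.ofReal r) (ENNReal.ofReal x))
      ≤ (2 * μ (Icc 0 (ENNReal.ofReal r)) + μ (Ioc (ENNReal.ofReal r) (ENNReal.ofReal x)))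
          * μ (Ioc (ENNReal.ofReal r) (ENNReal.ofReal x))
    ∧ (2 * μ (Icc 0 (ENNReal.ofReal r)) + μ (Ioc (ENNReal.ofReal r) (ENNReal.ofReal x)))
          * μ (Ioc (ENNReal.ofReal r) (ENNReal.ofReal x))
        ≤ ENNReal.ofReal x * μ (Ioc (ENNReal.ofReal r) (ENNReal.ofReal x)) := by
  set R := ENNReal.ofReal r with hR
  set X := ENNReal.ofReal x with hX
  have hRX : R ≤ X := ENNReal.ofReal_le_ofReal hrx
  have hsplit : Icc (0:ℝ≥0∞) X = Icc 0 R ∪ Ioc R X := (Icc_union_Ioc_eq_Icc (zero_le (a := R)) hRX).symm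
  have hdisj : Disjoint (Icc (0:ℝ≥0∞) R) (Ioc R X) := by
    rw [Set.disjoint_left]; rintro y ⟨-, h1⟩ ⟨h2, -⟩; exact absurd h1 (not_le.2 h2)
  set F := μ (Icc (0:ℝ≥0∞) R) with hF
  set c := μ (Ioc R X) with hc
  have hmeas : μ (Icc (0:ℝ≥0∞) X) = F + c := by
    rw [hsplit, measure_union hdisj measurableSet_Ioc]
  have hint : ∫⁻ s in Icc (0:ℝ≥0∞) X, s ∂μ
      = ∫⁻ s in Icc (0:ℝ≥0∞) R, s ∂μ + ∫⁻ s in Ioc R X, s ∂μ := by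
    rw [hsplit, lintegral_union measurableSet_Ioc hdisj]
  have h1 := hRDE x ⟨le_trans hr hrx, hx⟩
  have h2 := hRDE r ⟨hr, le_trans hrx hx⟩
  rw [← hX] at h1
  rw [← hR, ← hF] at h2
  rw [hint, hmeas] at h1
  have hFne : F ≠ ⊤ := measure_ne_top μ _
  have hIoc : ∫⁻ s in Ioc R X, s ∂μ = (2*F + c) * c := by
    have hexp : (F + c)^2 = F^2 + (2*F + c)*c := by ring
    rw [h2, hexp] at h1
    exact (ENNReal.add_right_inj (by simp [hFne])).1 h1
  constructor
  · calc R * c = ∫⁻ _ in Ioc R X, R ∂μ := by rw [setLIntegral_const]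
      _ ≤ ∫⁻ s in Ioc R X, s ∂μ := setLIntegral_mono' measurableSet_Ioc (fun y hy => hy.1.le)
      _ = (2*F + c) * c := hIoc
  · calc (2*F + c) * c = ∫⁻ s in Ioc R X, s ∂μ := hIoc.symm
      _ ≤ ∫⁻ _ in Ioc R X, X ∂μ := setLIntegral_mono' measurableSet_Ioc (fun y hy => hy.2)
      _ = X * c := by rw [setLIntegral_const]

private lemma stmt3_icoEq (μ : Measure ℝ≥0∞) [IsProbabilityMeasure μ]
    (hRDE : ∀ t ∈ Set.Icc (0:ℝ) 1,
      ∫⁻ s in Set.Icc 0 (ENNReal.ofReal t), s ∂μ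
        = (μ (Set.Icc 0 (ENNReal.ofReal t)))^2)
    {t : ℝ} (ht0 : 0 < t) (ht1 : t ≤ 1) :
    ∫⁻ s in Set.Ico 0 (ENNReal.ofReal t), s ∂μ = (μ (Set.Ico 0 (ENNReal.ofReal t)))^2 := by
  set S : ℕ → Set ℝ≥0∞ := fun n => Icc 0 (ENNReal.ofReal (t - (t-0)/(n+1))) with hS
  have hmono : Monotone S := by
    intro m n hmn
    apply Icc_subset_Icc le_rfl
    apply ENNReal.ofReal_le_ofReal
    have := stmt3aux_anti (c := t - 0) (by linarith) hmn
    linarith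
  have hUnion : ⋃ n, S n = Ico 0 (ENNReal.ofReal t) := stmt3_unionIcc le_rfl ht0
  have hxmem : ∀ n : ℕ, t - (t-0)/(n+1) ∈ Set.Icc (0:ℝ) 1 := by
    intro n
    constructor
    · have h1 : (t-0)/(n+1) ≤ t - 0 := stmt3aux_le (by linarith) n
      linarith
    · have : 0 < (t-0)/(n+1) := stmt3aux_pos (by linarith) n
      linarith
  set ν := μ.withDensity (fun y => y) with hν
  have hνS : ∀ n, ν (S n) = (μ (S n))^2 := by
    intro n
    rw [hν, withDensity_apply _ measurableSet_Icc]
    exact hRDE _ (hxmem n)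
  have hν1 : Tendsto (fun n => ν (S n)) atTop (nhds (ν (Ico 0 (ENNReal.ofReal t)))) := by
    have := tendsto_measure_iUnion_atTop (μ := ν) hmono
    rwa [hUnion] at this
  have hμ1 : Tendsto (fun n => (μ (S n))^2) atTop
      (nhds ((μ (Ico 0 (ENNReal.ofReal t)))^2)) := by
    have h := tendsto_measure_iUnion_atTop (μ := μ) hmono
    rw [hUnion] at h
    exact ((ENNReal.continuous_pow 2).tendsto _).comp h
  have : ν (Ico 0 (ENNReal.ofReal t)) = (μ (Ico 0 (ENNReal.ofReal t)))^2 := by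
    refine tendsto_nhds_unique ?_ hμ1
    exact hν1.congr (fun n => hνS n)
  rwa [hν, withDensity_apply _ measurableSet_Ico] at this

theorem stmt3 (μ : Measure ℝ≥0∞) [IsProbabilityMeasure μ]
    (hconc : μ {x : ℝ≥0∞ | 1 < x ∧ x ≠ ⊤} = 0)
    (hRDE : ∀ t ∈ Set.Icc (0:ℝ) 1,
      ∫⁻ s in Set.Icc 0 (ENNReal.ofReal t), s ∂μ
        = (μ (Set.Icc 0 (ENNReal.ofReal t)))^2) :
    (∀ s u : ℝ, 0 ≤ s → s ≤ u → u ≤ 1 →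
      (∀ r ∈ Set.Ico s u, μ {ENNReal.ofReal r} = 0) →
      (∀ r ∈ Set.Ico s u,
        μ (Set.Icc 0 (ENNReal.ofReal r)) ≠ ENNReal.ofReal (r/2)) →
      ∀ r ∈ Set.Ico s u,
        μ (Set.Icc 0 (ENNReal.ofReal r)) = μ (Set.Icc 0 (ENNReal.ofReal s)))
    ∧ (∀ t ∈ Set.Icc (0:ℝ) 1, 0 < μ {ENNReal.ofReal t} →
        2 * μ (Set.Ico 0 (ENNReal.ofReal t)) + μ {ENNReal.ofReal t}
          = ENNReal.ofReal t) := by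
  have hF : ∀ a b : ℝ, a ≤ b →
      μ (Icc 0 (ENNReal.ofReal a)) ≤ μ (Icc 0 (ENNReal.ofReal b)) := fun a b h =>
    measure_mono (Icc_subset_Icc le_rfl (ENNReal.ofReal_le_ofReal h))
  constructor
  · -- part (a)
    rintro s u hs hsu hu1 hatom hne r ⟨hsr, hru⟩
    by_contra hcon
    have hlt : μ (Icc 0 (ENNReal.ofReal s)) < μ (Icc 0 (ENNReal.ofReal r)) :=
      (hF s r hsr).lt_of_ne (Ne.symm hcon)
    set A := {x : ℝ | x ∈ Icc s r ∧
      μ (Icc 0 (ENNReal.ofReal s)) < μ (Icc 0 (ENNReal.ofReal x))} with hA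
    have hrA : r ∈ A := ⟨⟨hsr, le_rfl⟩, hlt⟩
    have hAne : A.Nonempty := ⟨r, hrA⟩
    have hAbdd : BddBelow A := ⟨s, fun x hx => hx.1.1⟩
    set a := sInf A with ha
    have has : s ≤ a := le_csInf hAne (fun x hx => hx.1.1)
    have har : a ≤ r := csInf_le hAbdd hrA
    have ha0 : 0 ≤ a := le_trans hs has
    have hau : a < u := lt_of_le_of_lt har hru
    have hconst : ∀ x : ℝ, s ≤ x → x < a →
        μ (Icc 0 (ENNReal.ofReal x)) = μ (Icc 0 (ENNReal.ofReal s)) := by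
      intro x h1 h2
      rcases lt_or_ge (μ (Icc 0 (ENNReal.ofReal s))) (μ (Icc 0 (ENNReal.ofReal x))) with h | h
      · exact absurd (csInf_le hAbdd ⟨⟨h1, le_trans h2.le har⟩, h⟩) (not_le.2 h2)
      · exact le_antisymm h (hF s x h1)
    have hFa : μ (Icc 0 (ENNReal.ofReal a)) = μ (Icc 0 (ENNReal.ofReal s)) := by
      rcases eq_or_lt_of_le has with h | hsa
      · rw [← h]
      · have hatom_a : μ {ENNReal.ofReal a} = 0 := hatom a ⟨has, hau⟩
        have hsplit : Icc (0:ℝ≥0∞) (ENNReal.ofReal a)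
            = Ico 0 (ENNReal.ofReal a) ∪ {ENNReal.ofReal a} :=
          (Ico_union_right zero_le).symm
        have hdisj : Disjoint (Ico (0:ℝ≥0∞) (ENNReal.ofReal a)) {ENNReal.ofReal a} := by
          rw [Set.disjoint_left]; rintro y ⟨-, h1⟩ h2
          rw [mem_singleton_iff] at h2; exact absurd h2 h1.ne
        rw [hsplit, measure_union hdisj (measurableSet_singleton _), hatom_a, add_zero]
        have hU := stmt3_unionIcc hs hsa
        have hmonoS : Monotone (fun n : ℕ => Icc (0:ℝ≥0∞) (ENNReal.ofReal (a - (a-s)/(n+1)))) := by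
          intro m n hmn
          apply Icc_subset_Icc le_rfl
          apply ENNReal.ofReal_le_ofReal
          have := stmt3aux_anti (c := a - s) (by linarith) hmn
          linarith
        have htend := tendsto_measure_iUnion_atTop (μ := μ) hmonoS
        rw [hU] at htend
        have hval : ∀ n : ℕ, μ (Icc 0 (ENNReal.ofReal (a - (a-s)/(n+1))))
            = μ (Icc 0 (ENNReal.ofReal s)) := by
          intro n
          apply hconst
          · have : (a-s)/(n+1) ≤ a - s := stmt3aux_le (by linarith) n
            linarith
          · have : 0 < (a-s)/(n+1) := stmt3aux_pos (by linarith) n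
            linarith
        have hconsttend : Tendsto (fun _ : ℕ => μ (Icc 0 (ENNReal.ofReal s))) atTop
            (nhds (μ (Ico 0 (ENNReal.ofReal a)))) := Tendsto.congr hval htend
        exact tendsto_nhds_unique hconsttend tendsto_const_nhds
    have halt_r : a < r :=
      lt_of_le_of_ne har (fun h => by rw [h] at hFa; exact absurd hFa hlt.ne')
    have hstrict : ∀ x : ℝ, a < x → x ≤ r →
        μ (Icc 0 (ENNReal.ofReal a)) < μ (Icc 0 (ENNReal.ofReal x)) := by
      intro x h1 h2
      obtain ⟨y, hyA, hylt⟩ := exists_lt_of_csInf_lt hAne h1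
      calc μ (Icc 0 (ENNReal.ofReal a)) = μ (Icc 0 (ENNReal.ofReal s)) := hFa
        _ < μ (Icc 0 (ENNReal.ofReal y)) := hyA.2
        _ ≤ μ (Icc 0 (ENNReal.ofReal x)) := hF y x hylt.le
    -- sequence x n := a + (r-a)/(n+1)
    set x : ℕ → ℝ := fun n => a + (r-a)/(n+1) with hx
    have hra : 0 < r - a := by linarith
    have hx_gt : ∀ n, a < x n := fun n => by
      have := stmt3aux_pos hra n; simp only [hx]; linarith
    have hx_le : ∀ n, x n ≤ r := fun n => by
      have := stmt3aux_le hra.le n; simp only [hx]; linarith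
    have hx1 : ∀ n, x n ≤ 1 := fun n => le_trans (hx_le n) (by linarith)
    set c : ℕ → ℝ≥0∞ := fun n => μ (Ioc (ENNReal.ofReal a) (ENNReal.ofReal (x n))) with hc
    have hsplit2 : ∀ n, μ (Icc 0 (ENNReal.ofReal (x n)))
        = μ (Icc 0 (ENNReal.ofReal a)) + c n := by
      intro n
      have hd : Disjoint (Icc (0:ℝ≥0∞) (ENNReal.ofReal a))
          (Ioc (ENNReal.ofReal a) (ENNReal.ofReal (x n))) := by
        rw [Set.disjoint_left]; rintro y ⟨-, h1⟩ ⟨h2, -⟩; exact absurd h1 (not_le.2 h2)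
      have hm := measure_union (μ := μ) hd (measurableSet_Ioc
        (a := ENNReal.ofReal a) (b := ENNReal.ofReal (x n)))
      rwa [Icc_union_Ioc_eq_Icc zero_le (ENNReal.ofReal_le_ofReal (hx_gt n).le)] at hm
    have hcne : ∀ n, c n ≠ 0 := by
      intro n hc0
      have := hsplit2 n
      rw [hc0, add_zero] at this
      exact absurd this.symm (hstrict (x n) (hx_gt n) (hx_le n)).ne
    have hkey : ∀ n, ENNReal.ofReal a ≤ 2 * μ (Icc 0 (ENNReal.ofReal a)) + c n
        ∧ 2 * μ (Icc 0 (ENNReal.ofReal a)) + c n ≤ ENNReal.ofReal (x n) := by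
      intro n
      obtain ⟨k1, k2⟩ := stmt3_key μ hRDE ha0 (hx_gt n).le (hx1 n)
      constructor
      · exact (ENNReal.mul_le_mul_iff_left (hcne n) (measure_ne_top μ _)).1 k1
      · exact (ENNReal.mul_le_mul_iff_left (hcne n) (measure_ne_top μ _)).1 k2
    -- limits
    have hxa : Tendsto x atTop (nhds a) := stmt3aux_tendsto a (r - a)
    have hxanti : ∀ m n : ℕ, m ≤ n → x n ≤ x m := by
      intro m n hmn
      have := stmt3aux_anti (c := r - a) hra.le hmn
      simp only [hx]; linarith
    have hiInter : (⋂ n, Ioc (ENNReal.ofReal a) (ENNReal.ofReal (x n))) = ∅ := by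
      ext y
      simp only [mem_iInter, mem_Ioc, mem_empty_iff_false, iff_false, not_forall]
      by_contra hcon2
      push_neg at hcon2
      have hyt : y ≠ ⊤ := by
        have := (hcon2 0).2
        exact ne_top_of_le_ne_top ENNReal.ofReal_ne_top this
      have hyR : ∀ n, y.toReal ≤ x n := fun n =>
        (ENNReal.le_ofReal_iff_toReal_le hyt (le_trans ha0 (hx_gt n).le)).1 (hcon2 n).2
      have hya : y.toReal ≤ a := ge_of_tendsto hxa (Eventually.of_forall hyR)
      have : y ≤ ENNReal.ofReal a := (ENNReal.le_ofReal_iff_toReal_le hyt ha0).2 hya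
      exact absurd (hcon2 0).1 (not_lt.2 this)
    have hc0 : Tendsto c atTop (nhds 0) := by
      have h := tendsto_measure_iInter_atTop (μ := μ)
        (s := fun n => Ioc (ENNReal.ofReal a) (ENNReal.ofReal (x n)))
        (fun n => measurableSet_Ioc.nullMeasurableSet)
        (fun m n hmn => Ioc_subset_Ioc le_rfl (ENNReal.ofReal_le_ofReal (hxanti m n hmn)))
        ⟨0, measure_ne_top μ _⟩
      rw [hiInter, measure_empty] at h
      exact h
    have hsum : Tendsto (fun n => 2 * μ (Icc 0 (ENNReal.ofReal a)) + c n) atTop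
        (nhds (2 * μ (Icc 0 (ENNReal.ofReal a)))) := by
      have := (tendsto_const_nhds :
        Tendsto (fun _ : ℕ => 2 * μ (Icc 0 (ENNReal.ofReal a))) atTop _).add hc0
      simpa using this
    have hofxa : Tendsto (fun n => ENNReal.ofReal (x n)) atTop (nhds (ENNReal.ofReal a)) :=
      ENNReal.tendsto_ofReal hxa
    have hle1 : 2 * μ (Icc 0 (ENNReal.ofReal a)) ≤ ENNReal.ofReal a :=
      le_of_tendsto_of_tendsto' hsum hofxa (fun n => (hkey n).2)
    have hle2 : ENNReal.ofReal a ≤ 2 * μ (Icc 0 (ENNReal.ofReal a)) :=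
      le_of_tendsto_of_tendsto' tendsto_const_nhds hsum (fun n => (hkey n).1)
    have heq : 2 * μ (Icc 0 (ENNReal.ofReal a)) = ENNReal.ofReal a := le_antisymm hle1 hle2
    have h2 : ENNReal.ofReal (a/2) = ENNReal.ofReal a / 2 := by
      rw [ENNReal.ofReal_div_of_pos (by norm_num)]
      norm_num
    have : μ (Icc 0 (ENNReal.ofReal a)) = ENNReal.ofReal (a/2) := by
      rw [h2, ENNReal.eq_div_iff (by norm_num) (by norm_num)]
      exact heq
    exact hne a ⟨has, hau⟩ this
  · -- part (b)
    rintro t ⟨ht0, ht1⟩ hc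
    rcases eq_or_lt_of_le ht0 with h0 | hpos
    · exfalso
      have h := hRDE 0 ⟨le_rfl, zero_le_one⟩
      rw [ENNReal.ofReal_zero, Icc_self, lintegral_singleton] at h
      simp only [zero_mul] at h
      have : μ {(0:ℝ≥0∞)} = 0 := by
        have := h.symm
        rwa [pow_eq_zero_iff (by norm_num)] at this
      rw [← h0] at hc
      simp only [ENNReal.ofReal_zero] at hc
      exact absurd this hc.ne'
    · set T := ENNReal.ofReal t with hT
      set L := μ (Ico (0:ℝ≥0∞) T) with hL
      set cc := μ {T} with hcc
      have hsplit : Icc (0:ℝ≥0∞) T = Ico 0 T ∪ {T} := (Ico_union_right zero_le).symm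
      have hdisj : Disjoint (Ico (0:ℝ≥0∞) T) {T} := by
        rw [Set.disjoint_left]; rintro y ⟨-, h1⟩ h2
        rw [mem_singleton_iff] at h2; exact absurd h2 h1.ne
      have hmeas : μ (Icc (0:ℝ≥0∞) T) = L + cc := by
        rw [hsplit, measure_union hdisj (measurableSet_singleton _)]
      have hint : ∫⁻ s in Icc (0:ℝ≥0∞) T, s ∂μ
          = ∫⁻ s in Ico (0:ℝ≥0∞) T, s ∂μ + T * cc := by
        rw [hsplit, lintegral_union (measurableSet_singleton _) hdisj, lintegral_singleton]
      have h1 := hRDE t ⟨ht0, ht1⟩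
      rw [← hT] at h1
      rw [hint, hmeas, stmt3_icoEq μ hRDE hpos ht1, ← hT, ← hL] at h1
      have hLne : L ≠ ⊤ := measure_ne_top μ _
      have hTc : T * cc = (2*L + cc) * cc := by
        have hexp : (L + cc)^2 = L^2 + (2*L + cc)*cc := by ring
        rw [hexp] at h1
        exact (ENNReal.add_right_inj (by simp [hLne])).1 h1
      have h5 : T = 2*L + cc := le_antisymm
        ((ENNReal.mul_le_mul_iff_left hc.ne' (measure_ne_top μ _)).1 hTc.le)
        ((ENNReal.mul_le_mul_iff_left hc.ne' (measure_ne_top μ _)).1 hTc.ge)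
      rw [h5]
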